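/- arXiv:2204.00263 — 2 statements merged into one kernel-verified Lean document; each statement's English description precedes it below -/
import Mathlib

section
/- Let (X, d) be a bounded Polish space (i.e., d is a bounded metric) and q ∈ [1, ∞). Then for Borel probability measures μ_n, μ on X, convergence W_q(μ_n, μ) → 0 holds if and only if μ_n converges weakly to μ. -/
open MeasureTheory ENNReal

open Filter Set Topology in
private lemma map_finset_sum'' {α β : Type*} [MeasurableSpace α] [MeasurableSpace β]
    (s : Finset ℕ) (μ : ℕ → Measure α) {f : α → β} (hf : Measurable f) :
    (∑ i ∈ s, μ i).map f = ∑ i ∈ s, (μ i).map f := by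
  classical
  induction s using Finset.induction with
  | empty => simp [Measure.map_zero]
  | insert _ _ h ih => rw [Finset.sum_insert h, Finset.sum_insert h, Measure.map_add _ _ hf, ih]

section decomp
open Filter Set Topology
variable {X : Type*} [MeasurableSpace X]

private lemma decomp_eq (ρ : Measure X) [IsProbabilityMeasure ρ] (As : ℕ → Set X)
    (hmble : ∀ i, MeasurableSet (As i)) (hd : Pairwise (Function.onFun Disjoint As))
    (N : ℕ) (m : ℕ → ℝ≥0∞) (hle : ∀ i, m i ≤ ρ (As i)) :
    (∑ i ∈ Finset.range N, (m i / ρ (As i)) • ρ.restrict (As i)) +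
      ((∑ i ∈ Finset.range N, ((ρ (As i) - m i) / ρ (As i)) • ρ.restrict (As i)) +
        ρ.restrict (⋃ i ∈ Finset.range N, As i)ᶜ) = ρ := by
  ext s hs
  simp only [Measure.add_apply, Measure.coe_finset_sum, Finset.sum_apply, Measure.smul_apply,
    smul_eq_mul, Measure.restrict_apply hs]
  have key : ∀ i ∈ Finset.range N,
      m i / ρ (As i) * ρ (s ∩ As i) + (ρ (As i) - m i) / ρ (As i) * ρ (s ∩ As i)
        = ρ (s ∩ As i) := by
    intro i _
    by_cases h0 : ρ (As i) = 0
    · have : ρ (s ∩ As i) = 0 := measure_mono_null Set.inter_subset_right h0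
      simp [this]
    · rw [← add_mul, ENNReal.div_add_div_same, add_tsub_cancel_of_le (hle i),
        ENNReal.div_self h0 (measure_ne_top _ _), one_mul]
  have hsum : ∑ i ∈ Finset.range N, ρ (s ∩ As i) = ρ (s ∩ ⋃ i ∈ Finset.range N, As i) := by
    rw [Set.inter_iUnion₂]
    rw [measure_biUnion_finset ?_ (fun i _ => hs.inter (hmble i))]
    intro i _ j _ hij
    exact (hd hij).mono Set.inter_subset_right Set.inter_subset_right
  calc ∑ i ∈ Finset.range N, m i / ρ (As i) * ρ (s ∩ As i) +
        (∑ i ∈ Finset.range N, (ρ (As i) - m i) / ρ (As i) * ρ (s ∩ As i) +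
          ρ (s ∩ (⋃ i ∈ Finset.range N, As i)ᶜ))
      = (∑ i ∈ Finset.range N, (m i / ρ (As i) * ρ (s ∩ As i) +
          (ρ (As i) - m i) / ρ (As i) * ρ (s ∩ As i))) +
          ρ (s ∩ (⋃ i ∈ Finset.range N, As i)ᶜ) := by
        rw [Finset.sum_add_distrib]; ring
    _ = ρ (s ∩ ⋃ i ∈ Finset.range N, As i) + ρ (s \ ⋃ i ∈ Finset.range N, As i) := by
        rw [Finset.sum_congr rfl key, hsum, Set.diff_eq]
    _ = ρ s := measure_inter_add_diff s (MeasurableSet.biUnion (Finset.range N).countable_toSet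
          (fun i _ => hmble i))

private lemma decomp_mass (ρ : Measure X) [IsProbabilityMeasure ρ] (As : ℕ → Set X)
    (hmble : ∀ i, MeasurableSet (As i)) (hd : Pairwise (Function.onFun Disjoint As))
    (N : ℕ) (m : ℕ → ℝ≥0∞) (hle : ∀ i, m i ≤ ρ (As i)) :
    ((∑ i ∈ Finset.range N, ((ρ (As i) - m i) / ρ (As i)) • ρ.restrict (As i)) +
        ρ.restrict (⋃ i ∈ Finset.range N, As i)ᶜ) Set.univ
      = 1 - ∑ i ∈ Finset.range N, m i := by
  have hSmble : MeasurableSet (⋃ i ∈ Finset.range N, As i) :=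
    MeasurableSet.biUnion (Finset.range N).countable_toSet (fun i _ => hmble i)
  have hSsum : ρ (⋃ i ∈ Finset.range N, As i) = ∑ i ∈ Finset.range N, ρ (As i) := by
    rw [measure_biUnion_finset (fun i _ j _ hij => hd hij) (fun i _ => hmble i)]
  have hS1 : ∑ i ∈ Finset.range N, ρ (As i) ≤ 1 := by
    rw [← hSsum]; exact prob_le_one
  have hm1 : ∑ i ∈ Finset.range N, m i ≤ ∑ i ∈ Finset.range N, ρ (As i) :=
    Finset.sum_le_sum fun i _ => hle i
  simp only [Measure.add_apply, Measure.coe_finset_sum, Finset.sum_apply, Measure.smul_apply,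
    smul_eq_mul, Measure.restrict_apply_univ]
  have key : ∀ i ∈ Finset.range N, (ρ (As i) - m i) / ρ (As i) * ρ (As i) = ρ (As i) - m i := by
    intro i _
    by_cases h0 : ρ (As i) = 0
    · have : m i = 0 := le_antisymm (h0 ▸ hle i) zero_le
      simp [h0, this]
    · exact ENNReal.div_mul_cancel h0 (measure_ne_top _ _)
  rw [Finset.sum_congr rfl key]
  have hsub : ∑ i ∈ Finset.range N, (ρ (As i) - m i)
      = ∑ i ∈ Finset.range N, ρ (As i) - ∑ i ∈ Finset.range N, m i := by
    have h1 : ∑ i ∈ Finset.range N, (ρ (As i) - m i) + ∑ i ∈ Finset.range N, m i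
        = ∑ i ∈ Finset.range N, ρ (As i) := by
      rw [← Finset.sum_add_distrib]
      exact Finset.sum_congr rfl fun i _ => tsub_add_cancel_of_le (hle i)
    exact ENNReal.eq_sub_of_add_eq (lt_of_le_of_lt (hm1.trans hS1) one_lt_top).ne h1
  rw [hsub, measure_compl hSmble (measure_ne_top _ _), measure_univ, hSsum, add_comm]
  exact tsub_add_tsub_cancel hS1 hm1

end decomp

/-- The Wasserstein distance of order `q` between two measures. -/
noncomputable def wassersteinDist {X : Type*} [MetricSpace X] [MeasurableSpace X]
    (q : ℝ) (μ ν : Measure X) : ℝ≥0∞ :=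
  ⨅ (π : Measure (X × X)) (_ : π.map Prod.fst = μ) (_ : π.map Prod.snd = ν),
    (∫⁻ p, edist p.1 p.2 ^ q ∂π) ^ (1 / q)

section lemB
open Filter Set Topology
variable {X : Type*} [MetricSpace X] [MeasurableSpace X] [BorelSpace X]
  [SecondCountableTopology X]

private lemma coeff_mul_snd {a b m : ℝ≥0∞} (ha : a ≠ ∞) (hb : b ≠ ∞) (hm : m ≤ b) :
    m / (a * b) * b = m / a := by
  by_cases hb0 : b = 0
  · have : m = 0 := le_antisymm (hb0 ▸ hm) zero_le
    simp [hb0, this]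
  · rw [div_eq_mul_inv, div_eq_mul_inv, ENNReal.mul_inv (Or.inr hb) (Or.inl ha),
      mul_assoc, mul_assoc, ENNReal.inv_mul_cancel hb0 hb, mul_one]

private lemma wasserstein_le_of_partition (q : ℝ) (hq : 0 < q)
    (μ ν : Measure X) [IsProbabilityMeasure μ] [IsProbabilityMeasure ν]
    (As : ℕ → Set X) (As_mble : ∀ i, MeasurableSet (As i))
    (As_disj : Pairwise (Function.onFun Disjoint As))
    {e : ℝ≥0∞} (As_diam : ∀ i, EMetric.diam (As i) ≤ e) (N : ℕ) :
    wassersteinDist q μ ν ≤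
      (e ^ q + (EMetric.diam (Set.univ : Set X)) ^ q *
        (1 - ∑ i ∈ Finset.range N, min (μ (As i)) (ν (As i)))) ^ (1 / q) := by
  classical
  set m : ℕ → ℝ≥0∞ := fun i => min (μ (As i)) (ν (As i)) with hm_def
  have hmμ : ∀ i, m i ≤ μ (As i) := fun i => min_le_left _ _
  have hmν : ∀ i, m i ≤ ν (As i) := fun i => min_le_right _ _
  set S : Set X := ⋃ i ∈ Finset.range N, As i with hS_def
  set t : ℝ≥0∞ := 1 - ∑ i ∈ Finset.range N, m i with ht_def
  have ht1 : t ≤ 1 := tsub_le_self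
  set α : Measure X := (∑ i ∈ Finset.range N, ((μ (As i) - m i) / μ (As i)) • μ.restrict (As i)) +
    μ.restrict Sᶜ with hα_def
  set β : Measure X := (∑ i ∈ Finset.range N, ((ν (As i) - m i) / ν (As i)) • ν.restrict (As i)) +
    ν.restrict Sᶜ with hβ_def
  have hαuniv : α Set.univ = t := decomp_mass μ As As_mble As_disj N m hmμ
  have hβuniv : β Set.univ = t := decomp_mass ν As As_mble As_disj N m hmν
  haveI : IsFiniteMeasure α := ⟨by rw [hαuniv]; exact lt_of_le_of_lt ht1 one_lt_top⟩
  haveI : IsFiniteMeasure β := ⟨by rw [hβuniv]; exact lt_of_le_of_lt ht1 one_lt_top⟩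
  set π : Measure (X × X) :=
    (∑ i ∈ Finset.range N,
      (m i / (μ (As i) * ν (As i))) • ((μ.restrict (As i)).prod (ν.restrict (As i)))) +
    t⁻¹ • (α.prod β) with hπ_def
  have ht_smul : ∀ (ρ : Measure X), ρ Set.univ = t → t⁻¹ • (t • ρ) = ρ := by
    intro ρ hρ
    by_cases ht0 : t = 0
    · have : ρ = 0 := Measure.measure_univ_eq_zero.mp (by rw [hρ, ht0])
      simp [this]
    · rw [smul_smul, ENNReal.inv_mul_cancel ht0 (lt_of_le_of_lt ht1 one_lt_top).ne, one_smul]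
  have hfst : π.map Prod.fst = μ := by
    rw [hπ_def, Measure.map_add _ _ measurable_fst, map_finset_sum'' _ _ measurable_fst,
      Measure.map_smul, Measure.map_fst_prod]
    have hcoef : ∀ i ∈ Finset.range N,
        ((m i / (μ (As i) * ν (As i))) • ((μ.restrict (As i)).prod (ν.restrict (As i)))).map
            Prod.fst
          = (m i / μ (As i)) • μ.restrict (As i) := by
      intro i _
      rw [Measure.map_smul, Measure.map_fst_prod, Measure.restrict_apply_univ, smul_smul,
        coeff_mul_snd (measure_ne_top _ _) (measure_ne_top _ _) (hmν i)]
    rw [Finset.sum_congr rfl hcoef, hβuniv, ht_smul α hαuniv]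
    exact decomp_eq μ As As_mble As_disj N m hmμ
  have hsnd : π.map Prod.snd = ν := by
    rw [hπ_def, Measure.map_add _ _ measurable_snd, map_finset_sum'' _ _ measurable_snd,
      Measure.map_smul, Measure.map_snd_prod]
    have hcoef : ∀ i ∈ Finset.range N,
        ((m i / (μ (As i) * ν (As i))) • ((μ.restrict (As i)).prod (ν.restrict (As i)))).map
            Prod.snd
          = (m i / ν (As i)) • ν.restrict (As i) := by
      intro i _
      rw [Measure.map_smul, Measure.map_snd_prod, Measure.restrict_apply_univ, smul_smul]
      congr 1
      rw [mul_comm (μ (As i)) (ν (As i))]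
      exact coeff_mul_snd (measure_ne_top _ _) (measure_ne_top _ _) (hmμ i)
    rw [Finset.sum_congr rfl hcoef, hαuniv, ht_smul β hβuniv]
    exact decomp_eq ν As As_mble As_disj N m hmν
  have hcost : ∫⁻ p, edist p.1 p.2 ^ q ∂π ≤
      e ^ q + (EMetric.diam (Set.univ : Set X)) ^ q * t := by
    rw [hπ_def, lintegral_add_measure, lintegral_finset_sum_measure, lintegral_smul_measure]
    have hterm : ∀ i ∈ Finset.range N,
        ∫⁻ p, edist p.1 p.2 ^ q ∂((m i / (μ (As i) * ν (As i))) •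
          ((μ.restrict (As i)).prod (ν.restrict (As i)))) ≤ e ^ q * m i := by
      intro i _
      rw [lintegral_smul_measure, Measure.prod_restrict]
      have hbound : ∫⁻ p in (As i ×ˢ As i), edist p.1 p.2 ^ q ∂(μ.prod ν)
          ≤ e ^ q * (μ (As i) * ν (As i)) := by
        calc ∫⁻ p in (As i ×ˢ As i), edist p.1 p.2 ^ q ∂(μ.prod ν)
            ≤ ∫⁻ _ in (As i ×ˢ As i), e ^ q ∂(μ.prod ν) := by
              apply setLIntegral_mono' ((As_mble i).prod (As_mble i))
              intro p hp
              exact ENNReal.rpow_le_rpow ((EMetric.edist_le_diam_of_mem hp.1 hp.2).trans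
                (As_diam i)) hq.le
          _ = e ^ q * (μ.prod ν) (As i ×ˢ As i) := setLIntegral_const _ _
          _ = e ^ q * (μ (As i) * ν (As i)) := by rw [Measure.prod_prod]
      calc m i / (μ (As i) * ν (As i)) * ∫⁻ p in (As i ×ˢ As i), edist p.1 p.2 ^ q ∂(μ.prod ν)
          ≤ m i / (μ (As i) * ν (As i)) * (e ^ q * (μ (As i) * ν (As i))) :=
            mul_le_mul_right hbound _
        _ = e ^ q * (m i / (μ (As i) * ν (As i)) * (μ (As i) * ν (As i))) := by ring
        _ ≤ e ^ q * m i := by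
            apply mul_le_mul_right
            by_cases hab : μ (As i) * ν (As i) = 0
            · simp [hab]
            · rw [ENNReal.div_mul_cancel hab (ENNReal.mul_ne_top (measure_ne_top _ _)
                (measure_ne_top _ _))]
    have hrem : t⁻¹ * ∫⁻ p, edist p.1 p.2 ^ q ∂(α.prod β)
        ≤ (EMetric.diam (Set.univ : Set X)) ^ q * t := by
      have hub : ∫⁻ p, edist p.1 p.2 ^ q ∂(α.prod β)
          ≤ (EMetric.diam (Set.univ : Set X)) ^ q * (t * t) := by
        calc ∫⁻ p, edist p.1 p.2 ^ q ∂(α.prod β)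
            ≤ ∫⁻ _, (EMetric.diam (Set.univ : Set X)) ^ q ∂(α.prod β) := by
              apply lintegral_mono
              intro p
              exact ENNReal.rpow_le_rpow (EMetric.edist_le_diam_of_mem (Set.mem_univ _)
                (Set.mem_univ _)) hq.le
          _ = (EMetric.diam (Set.univ : Set X)) ^ q * (α.prod β) Set.univ := lintegral_const _
          _ = (EMetric.diam (Set.univ : Set X)) ^ q * (t * t) := by
              rw [← Set.univ_prod_univ, Measure.prod_prod, hαuniv, hβuniv]
      calc t⁻¹ * ∫⁻ p, edist p.1 p.2 ^ q ∂(α.prod β)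
          ≤ t⁻¹ * ((EMetric.diam (Set.univ : Set X)) ^ q * (t * t)) := mul_le_mul_right hub _
        _ = (EMetric.diam (Set.univ : Set X)) ^ q * (t⁻¹ * (t * t)) := by ring
        _ ≤ (EMetric.diam (Set.univ : Set X)) ^ q * t := by
            apply mul_le_mul_right
            by_cases ht0 : t = 0
            · simp [ht0]
            · rw [← mul_assoc, ENNReal.inv_mul_cancel ht0 (lt_of_le_of_lt ht1 one_lt_top).ne,
                one_mul]
    have hsum_le : ∑ i ∈ Finset.range N, e ^ q * m i ≤ e ^ q := by
      rw [← Finset.mul_sum]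
      have hle1 : ∑ i ∈ Finset.range N, m i ≤ 1 := by
        calc ∑ i ∈ Finset.range N, m i ≤ ∑ i ∈ Finset.range N, μ (As i) :=
              Finset.sum_le_sum fun i _ => hmμ i
          _ = μ S := (measure_biUnion_finset (fun i _ j _ hij => As_disj hij)
              (fun i _ => As_mble i)).symm
          _ ≤ 1 := prob_le_one
      calc e ^ q * ∑ i ∈ Finset.range N, m i ≤ e ^ q * 1 := mul_le_mul_right hle1 _
        _ = e ^ q := mul_one _
    calc (∑ i ∈ Finset.range N, ∫⁻ p, edist p.1 p.2 ^ q ∂((m i / (μ (As i) * ν (As i))) •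
            ((μ.restrict (As i)).prod (ν.restrict (As i)))))
          + t⁻¹ * ∫⁻ p, edist p.1 p.2 ^ q ∂(α.prod β)
        ≤ (∑ i ∈ Finset.range N, e ^ q * m i) + (EMetric.diam (Set.univ : Set X)) ^ q * t :=
          add_le_add (Finset.sum_le_sum hterm) hrem
      _ ≤ e ^ q + (EMetric.diam (Set.univ : Set X)) ^ q * t := add_le_add_left hsum_le _
  calc wassersteinDist q μ ν ≤ (∫⁻ p, edist p.1 p.2 ^ q ∂π) ^ (1 / q) :=
        iInf_le_of_le π (iInf_le_of_le hfst (iInf_le _ hsnd))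
    _ ≤ (e ^ q + (EMetric.diam (Set.univ : Set X)) ^ q *
        (1 - ∑ i ∈ Finset.range N, min (μ (As i)) (ν (As i)))) ^ (1 / q) :=
        ENNReal.rpow_le_rpow hcost (by positivity)

end lemB

section forward
open Filter Set Topology

private lemma lintegral_le_rpow_lintegral_rpow' {Y : Type*} [MeasurableSpace Y] (π : Measure Y)
    [IsProbabilityMeasure π] {g : Y → ℝ≥0∞} (hg : AEMeasurable g π) {q : ℝ} (hq : 1 ≤ q) :
    ∫⁻ y, g y ∂π ≤ (∫⁻ y, g y ^ q ∂π) ^ (1 / q) := by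
  rcases eq_or_lt_of_le hq with h1 | h1
  · simp [← h1]
  · have hconj : q.HolderConjugate (q / (q - 1)) := Real.HolderConjugate.conjExponent h1
    have := ENNReal.lintegral_mul_le_Lp_mul_Lq π hconj hg (aemeasurable_const (b := (1 : ℝ≥0∞)))
    simpa [ENNReal.one_rpow, lintegral_const, measure_univ, mul_one] using this

variable {X : Type*} [MetricSpace X] [MeasurableSpace X] [BorelSpace X]
  [SecondCountableTopology X]

private lemma thickenedIndicatorAux_apply_le' (δ : ℝ) (F : Set X) (x y : X) :
    thickenedIndicatorAux δ F x ≤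
      thickenedIndicatorAux δ F y + (ENNReal.ofReal δ)⁻¹ * edist x y := by
  simp only [thickenedIndicatorAux]
  rw [tsub_le_iff_right]
  have h1 : EMetric.infEdist y F / ENNReal.ofReal δ ≤
      EMetric.infEdist x F / ENNReal.ofReal δ + (ENNReal.ofReal δ)⁻¹ * edist x y := by
    calc EMetric.infEdist y F / ENNReal.ofReal δ
        ≤ (EMetric.infEdist x F + edist y x) / ENNReal.ofReal δ :=
          ENNReal.div_le_div_right EMetric.infEdist_le_infEdist_add_edist _
      _ = EMetric.infEdist x F / ENNReal.ofReal δ + (ENNReal.ofReal δ)⁻¹ * edist x y := by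
          rw [ENNReal.add_div, edist_comm]
          congr 1
          rw [div_eq_mul_inv, mul_comm]
  calc (1 : ℝ≥0∞) ≤ 1 - EMetric.infEdist y F / ENNReal.ofReal δ +
        EMetric.infEdist y F / ENNReal.ofReal δ := le_tsub_add
    _ ≤ 1 - EMetric.infEdist y F / ENNReal.ofReal δ +
        (EMetric.infEdist x F / ENNReal.ofReal δ + (ENNReal.ofReal δ)⁻¹ * edist x y) :=
          add_le_add_right h1 _
    _ = 1 - EMetric.infEdist y F / ENNReal.ofReal δ + (ENNReal.ofReal δ)⁻¹ * edist x y +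
        EMetric.infEdist x F / ENNReal.ofReal δ := by ring

private lemma lintegral_thickAux_transfer {δ : ℝ} (hδ : 0 < δ) (F : Set X)
    {μ ν : Measure X} (π : Measure (X × X))
    (hfst : π.map Prod.fst = μ) (hsnd : π.map Prod.snd = ν) :
    ∫⁻ x, thickenedIndicatorAux δ F x ∂μ ≤
      ∫⁻ x, thickenedIndicatorAux δ F x ∂ν +
        (ENNReal.ofReal δ)⁻¹ * ∫⁻ p, edist p.1 p.2 ∂π := by
  have hmble : Measurable (thickenedIndicatorAux δ F) :=
    (continuous_thickenedIndicatorAux hδ F).measurable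
  have h1 : ∫⁻ x, thickenedIndicatorAux δ F x ∂μ
      = ∫⁻ p, thickenedIndicatorAux δ F p.1 ∂π := by
    rw [← hfst, lintegral_map hmble measurable_fst]
  have h2 : ∫⁻ x, thickenedIndicatorAux δ F x ∂ν
      = ∫⁻ p, thickenedIndicatorAux δ F p.2 ∂π := by
    rw [← hsnd, lintegral_map hmble measurable_snd]
  rw [h1, h2]
  calc ∫⁻ p, thickenedIndicatorAux δ F p.1 ∂π
      ≤ ∫⁻ p, (thickenedIndicatorAux δ F p.2 + (ENNReal.ofReal δ)⁻¹ * edist p.1 p.2) ∂π :=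
        lintegral_mono fun p => thickenedIndicatorAux_apply_le' δ F p.1 p.2
    _ = ∫⁻ p, thickenedIndicatorAux δ F p.2 ∂π +
        ∫⁻ p, (ENNReal.ofReal δ)⁻¹ * edist p.1 p.2 ∂π :=
        lintegral_add_left (hmble.comp measurable_snd) _
    _ = ∫⁻ p, thickenedIndicatorAux δ F p.2 ∂π +
        (ENNReal.ofReal δ)⁻¹ * ∫⁻ p, edist p.1 p.2 ∂π := by
        rw [lintegral_const_mul _ measurable_edist]

private lemma lintegral_thickAux_le_measure_thickening {δ : ℝ} (hδ : 0 < δ) (F : Set X)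
    (μ : Measure X) :
    ∫⁻ x, thickenedIndicatorAux δ F x ∂μ ≤ μ (Metric.thickening δ F) := by
  calc ∫⁻ x, thickenedIndicatorAux δ F x ∂μ
      ≤ ∫⁻ x, (Metric.thickening δ F).indicator 1 x ∂μ := by
        apply lintegral_mono
        intro x
        by_cases hx : x ∈ Metric.thickening δ F
        · simpa [hx] using thickenedIndicatorAux_le_one δ F x
        · simp [hx, thickenedIndicatorAux_zero hδ F hx]
    _ = μ (Metric.thickening δ F) :=
        lintegral_indicator_one Metric.isOpen_thickening.measurableSet

private lemma limsup_closed_le_of_wasserstein (q : ℝ) (hq : 1 ≤ q)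
    (μs : ℕ → Measure X) (μ : Measure X)
    [∀ n, IsProbabilityMeasure (μs n)] [IsProbabilityMeasure μ]
    (h : Tendsto (fun n => wassersteinDist q (μs n) μ) atTop (𝓝 0))
    {F : Set X} (hF : IsClosed F) :
    atTop.limsup (fun n => μs n F) ≤ μ F := by
  have step : ∀ δ : ℝ, 0 < δ → atTop.limsup (fun n => μs n F) ≤ μ (Metric.thickening δ F) := by
    intro δ hδ
    apply ENNReal.le_of_forall_pos_le_add
    intro η hη _
    have hc : (0 : ℝ≥0∞) < ENNReal.ofReal δ * η :=
      ENNReal.mul_pos (ENNReal.ofReal_pos.2 hδ).ne' (by exact_mod_cast hη.ne')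
    have hev : ∀ᶠ n in atTop, wassersteinDist q (μs n) μ < ENNReal.ofReal δ * η :=
      h.eventually_lt_const hc
    apply Filter.limsup_le_of_le (by isBoundedDefault)
    filter_upwards [hev] with n hn
    rw [wassersteinDist] at hn
    simp only [iInf_lt_iff] at hn
    obtain ⟨π, hfst, hsnd, hπ⟩ := hn
    haveI : IsProbabilityMeasure π := by
      constructor
      rw [← Set.preimage_univ (f := Prod.fst), ← Measure.map_apply measurable_fst
        MeasurableSet.univ, hfst, measure_univ]
    have hJ : ∫⁻ p, edist p.1 p.2 ∂π ≤ (∫⁻ p, edist p.1 p.2 ^ q ∂π) ^ (1 / q) :=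
      lintegral_le_rpow_lintegral_rpow' π measurable_edist.aemeasurable hq
    calc μs n F = ∫⁻ x, F.indicator 1 x ∂(μs n) :=
          (lintegral_indicator_one hF.measurableSet).symm
      _ ≤ ∫⁻ x, thickenedIndicatorAux δ F x ∂(μs n) :=
          lintegral_mono (indicator_le_thickenedIndicatorAux δ F)
      _ ≤ ∫⁻ x, thickenedIndicatorAux δ F x ∂μ +
          (ENNReal.ofReal δ)⁻¹ * ∫⁻ p, edist p.1 p.2 ∂π :=
          lintegral_thickAux_transfer hδ F π hfst hsnd
      _ ≤ μ (Metric.thickening δ F) + (ENNReal.ofReal δ)⁻¹ * (ENNReal.ofReal δ * η) :=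
          add_le_add (lintegral_thickAux_le_measure_thickening hδ F μ)
            (mul_le_mul_right (hJ.trans hπ.le) _)
      _ = μ (Metric.thickening δ F) + η := by
          rw [← mul_assoc, ENNReal.inv_mul_cancel (ENNReal.ofReal_pos.2 hδ).ne'
            ENNReal.ofReal_ne_top, one_mul]
  have tt := tendsto_measure_thickening_of_isClosed (μ := μ)
    ⟨1, one_pos, measure_ne_top μ _⟩ hF
  apply ge_of_tendsto tt
  filter_upwards [self_mem_nhdsWithin] with δ hδ
  exact step δ hδ

end forward

section frontier
open Filter Set Topology
variable {X : Type*} [TopologicalSpace X] [MeasurableSpace X]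

private lemma frontier_union_subset' (s t : Set X) :
    frontier (s ∪ t) ⊆ frontier s ∪ frontier t :=
  (frontier_union_subset s t).trans
    (union_subset_union inter_subset_left inter_subset_right)

private lemma frontier_inter_subset' (s t : Set X) :
    frontier (s ∩ t) ⊆ frontier s ∪ frontier t :=
  (frontier_inter_subset s t).trans
    (union_subset_union inter_subset_left inter_subset_right)

private lemma frontier_diff_subset' (s t : Set X) :
    frontier (s \ t) ⊆ frontier s ∪ frontier t := by
  rw [diff_eq]
  exact (frontier_inter_subset' s tᶜ).trans (by rw [frontier_compl])

private lemma null_frontier_disjointed (μ : Measure X) (Bs : ℕ → Set X)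
    (h : ∀ i, μ (frontier (Bs i)) = 0) (n : ℕ) :
    μ (frontier (disjointed Bs n)) = 0 := by
  have hp : ∀ k, μ (frontier (partialSups Bs k)) = 0 := by
    intro k
    induction k with
    | zero => simpa using h 0
    | succ k ih =>
      show μ (frontier (partialSups Bs (Order.succ k))) = 0
      rw [partialSups_succ]
      exact measure_mono_null (frontier_union_subset' _ _)
        (measure_union_null ih (h (k + 1)))
  cases n with
  | zero => simpa using h 0
  | succ n =>
    show μ (frontier (disjointed Bs (Order.succ n))) = 0
    rw [disjointed_succ _ (not_isMax n)]
    exact measure_mono_null (frontier_diff_subset' _ _)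
      (measure_union_null (h (n + 1)) (hp n))

end frontier

open Filter Set Topology in
/-- On a bounded Polish space, convergence in the Wasserstein distance of order `q`
is equivalent to weak convergence. -/
theorem tendsto_wasserstein_iff_weak {X : Type*} [MetricSpace X] [PolishSpace X]
    [BoundedSpace X] [MeasurableSpace X] [BorelSpace X]
    (q : ℝ) (hq : 1 ≤ q) (μs : ℕ → Measure X) (μ : Measure X)
    [∀ n, IsProbabilityMeasure (μs n)] [IsProbabilityMeasure μ] :
    Filter.Tendsto (fun n => wassersteinDist q (μs n) μ) Filter.atTop (nhds 0) ↔
      ∀ f : BoundedContinuousFunction X ℝ,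
        Filter.Tendsto (fun n => ∫ x, f x ∂(μs n)) Filter.atTop
          (nhds (∫ x, f x ∂μ)) := by
  have hq0 : 0 < q := lt_of_lt_of_le one_pos hq
  let P : ℕ → ProbabilityMeasure X := fun n => ⟨μs n, inferInstance⟩
  let P0 : ProbabilityMeasure X := ⟨μ, inferInstance⟩
  constructor
  · intro h f
    have hclosed : ∀ F, IsClosed F → atTop.limsup (fun n => μs n F) ≤ μ F :=
      fun F hF => limsup_closed_le_of_wasserstein q hq μs μ h hF
    have hopen : ∀ G, IsOpen G → μ G ≤ atTop.liminf (fun n => μs n G) :=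
      limsup_measure_closed_le_iff_liminf_measure_open_ge.mp hclosed
    have hP : Tendsto P atTop (𝓝 P0) := by
      apply tendsto_of_forall_isOpen_le_liminf
      intro G hG
      have hENN := hopen G hG
      have aux : (ENNReal.ofNNReal (atTop.liminf (fun i => P i G))) =
          atTop.liminf (fun i => ((P i G : NNReal) : ℝ≥0∞)) := by
        refine Monotone.map_liminf_of_continuousAt (F := atTop) ENNReal.coe_mono (fun i => P i G)
          ENNReal.continuous_coe.continuousAt ?_ ?_
        · exact IsBoundedUnder.isCoboundedUnder_ge
            ⟨1, Filter.eventually_map.mpr (Filter.Eventually.of_forall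
              fun i => ProbabilityMeasure.apply_le_one _ _)⟩
        · exact ⟨0, Filter.eventually_map.mpr (Filter.Eventually.of_forall
            fun i => zero_le)⟩
      rw [← ENNReal.coe_le_coe, aux]
      simp only [ProbabilityMeasure.ennreal_coeFn_eq_coeFn_toMeasure]
      exact hENN
    exact ProbabilityMeasure.tendsto_iff_forall_integral_tendsto.mp hP f
  · intro h
    have hP : Tendsto P atTop (𝓝 P0) :=
      ProbabilityMeasure.tendsto_iff_forall_integral_tendsto.mpr h
    have hne : Nonempty X := by
      by_contra hX
      rw [not_nonempty_iff] at hX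
      have h1 := measure_univ (μ := μ)
      rw [Set.univ_eq_empty_iff.mpr hX, measure_empty] at h1
      exact zero_ne_one h1
    set D := EMetric.diam (Set.univ : Set X) with hD
    have hDne : D ≠ ⊤ := (Bornology.isBounded_univ.mpr ‹_›).ediam_ne_top
    rw [ENNReal.tendsto_nhds_zero]
    intro ε' hε'
    set c := min ε' 1 with hc
    have hc0 : c ≠ 0 := (lt_min hε' one_pos).ne'
    have hcT : c ≠ ⊤ := ne_top_of_le_ne_top one_ne_top (min_le_right _ _)
    have hcq0 : 0 < c ^ q := ENNReal.rpow_pos (zero_lt_iff.mpr hc0) hcT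
    have htend : Tendsto (fun u : ℝ≥0∞ => u ^ q + D ^ q * u) (𝓝 0) (𝓝 0) := by
      have h1 : Tendsto (fun u : ℝ≥0∞ => u ^ q) (𝓝 0) (𝓝 0) := by
        have h2 := (ENNReal.continuous_rpow_const (y := q)).tendsto 0
        rwa [ENNReal.zero_rpow_of_pos hq0] at h2
      have h2 : Tendsto (fun u : ℝ≥0∞ => D ^ q * u) (𝓝 0) (𝓝 0) := by
        have h3 := (ENNReal.continuous_const_mul
          (ENNReal.rpow_ne_top_of_nonneg hq0.le hDne)).tendsto 0
        rwa [mul_zero] at h3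
      simpa using h1.add h2
    obtain ⟨u0, hu0pos, hu0⟩ := ENNReal.nhds_zero_basis.mem_iff.mp (htend (Iio_mem_nhds hcq0))
    set u := min u0 1 / 2 with hu
    have hmin_ne : min u0 1 ≠ 0 := (lt_min hu0pos one_pos).ne'
    have hmin_top : min u0 1 ≠ ⊤ := ne_top_of_le_ne_top one_ne_top (min_le_right _ _)
    have hu_pos : 0 < u := ENNReal.div_pos hmin_ne (by norm_num)
    have hu_lt : u < u0 :=
      lt_of_lt_of_le (ENNReal.half_lt_self hmin_ne hmin_top) (min_le_left _ _)
    have hu_ne_top : u ≠ ⊤ :=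
      ne_top_of_le_ne_top hmin_top ENNReal.half_le_self
    set ε := u.toReal / 2 with hε
    have hε_pos : 0 < ε := by
      have : 0 < u.toReal := ENNReal.toReal_pos hu_pos.ne' hu_ne_top
      positivity
    have hofReal : ENNReal.ofReal (2 * ε) = u := by
      rw [hε, show 2 * (u.toReal / 2) = u.toReal by ring, ENNReal.ofReal_toReal hu_ne_top]
    obtain ⟨xs, hxs⟩ := TopologicalSpace.exists_dense_seq X
    choose r hr hrnull using fun i =>
      exists_null_frontier_thickening μ ({xs i} : Set X) (show ε / 2 < ε by linarith)
    set Bs : ℕ → Set X := fun i => Metric.ball (xs i) (r i) with hBs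
    have hBnull : ∀ i, μ (frontier (Bs i)) = 0 := by
      intro i
      have := hrnull i
      rwa [Metric.thickening_singleton] at this
    set As : ℕ → Set X := disjointed Bs with hAs
    have hAs_mble : ∀ i, MeasurableSet (As i) :=
      MeasurableSet.disjointed (fun i => Metric.isOpen_ball.measurableSet)
    have hAs_disj : Pairwise (Function.onFun Disjoint As) := disjoint_disjointed Bs
    have hAs_null : ∀ i, μ (frontier (As i)) = 0 := null_frontier_disjointed μ Bs hBnull
    have hAs_diam : ∀ i, EMetric.diam (As i) ≤ ENNReal.ofReal (2 * ε) := by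
      intro i
      calc EMetric.diam (As i) ≤ EMetric.diam (Bs i) :=
            EMetric.diam_mono (disjointed_subset Bs i)
        _ ≤ 2 * ENNReal.ofReal (r i) := by
            show EMetric.diam (Metric.ball (xs i) (r i)) ≤ _
            rw [← Metric.emetric_ball]
            exact EMetric.diam_ball
        _ ≤ 2 * ENNReal.ofReal ε := mul_le_mul_right (ENNReal.ofReal_le_ofReal (hr i).2.le) _
        _ = ENNReal.ofReal (2 * ε) := by
            rw [ENNReal.ofReal_mul (by norm_num : (0:ℝ) ≤ 2)]
            norm_num
    have hAs_cover : ⋃ i, As i = univ := by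
      rw [hAs, iUnion_disjointed]
      apply eq_univ_of_forall
      intro x
      obtain ⟨i, hi⟩ := hxs.exists_dist_lt x (half_pos hε_pos)
      exact mem_iUnion.mpr ⟨i, Metric.mem_ball.mpr (lt_trans hi (hr i).1)⟩
    have hconv : ∀ i, Tendsto (fun n => μs n (As i)) atTop (𝓝 (μ (As i))) := fun i =>
      ProbabilityMeasure.tendsto_measure_of_null_frontier_of_tendsto' hP (hAs_null i)
    have htsum : Tendsto (fun N => ∑ i ∈ Finset.range N, μ (As i)) atTop (𝓝 1) := by
      have h4 := ENNReal.tendsto_nat_tsum (fun i => μ (As i))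
      rwa [← measure_iUnion hAs_disj hAs_mble, hAs_cover, measure_univ] at h4
    have h1u : (1 : ℝ≥0∞) - u < 1 := ENNReal.sub_lt_self one_ne_top one_ne_zero hu_pos.ne'
    obtain ⟨N, hN⟩ := (htsum.eventually_const_lt h1u).exists
    have hminconv : Tendsto (fun n => ∑ i ∈ Finset.range N, min (μs n (As i)) (μ (As i)))
        atTop (𝓝 (∑ i ∈ Finset.range N, μ (As i))) := by
      apply tendsto_finset_sum
      intro i _
      have h5 := (hconv i).min (tendsto_const_nhds (x := μ (As i)))
      rwa [min_self] at h5
    have hev : ∀ᶠ n in atTop,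
        (1 : ℝ≥0∞) - u < ∑ i ∈ Finset.range N, min (μs n (As i)) (μ (As i)) :=
      hminconv.eventually_const_lt hN
    filter_upwards [hev] with n hn
    have hb := wasserstein_le_of_partition q hq0 (μs n) μ As hAs_mble hAs_disj hAs_diam N
    have ht_le : 1 - ∑ i ∈ Finset.range N, min (μs n (As i)) (μ (As i)) ≤ u := by
      rw [tsub_le_iff_right]
      calc (1 : ℝ≥0∞) ≤ (1 - u) + u := le_tsub_add
        _ ≤ (∑ i ∈ Finset.range N, min (μs n (As i)) (μ (As i))) + u :=
            add_le_add_left hn.le _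
        _ = u + ∑ i ∈ Finset.range N, min (μs n (As i)) (μ (As i)) := add_comm _ _
    calc wassersteinDist q (μs n) μ
        ≤ (ENNReal.ofReal (2 * ε) ^ q + D ^ q *
            (1 - ∑ i ∈ Finset.range N, min (μs n (As i)) (μ (As i)))) ^ (1 / q) := hb
      _ ≤ (u ^ q + D ^ q * u) ^ (1 / q) :=
          ENNReal.rpow_le_rpow (add_le_add (by rw [hofReal]) (mul_le_mul_right ht_le _))
            (by positivity)
      _ ≤ (c ^ q) ^ (1 / q) := ENNReal.rpow_le_rpow (le_of_lt (hu0 hu_lt)) (by positivity)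
      _ = c := by rw [← ENNReal.rpow_mul, mul_one_div_cancel hq0.ne', ENNReal.rpow_one]
      _ ≤ ε' := min_le_left _ _
end

section
/- Let v : M → ℝ with ‖v‖_∞ < ∞, T : M → M a map, and define for n ≥ 1 the quantity Z_n = max_{0 ≤ i, l ≤ √n} |Σ_{j=i⌈√n⌉}^{i⌈√n⌉+l−1} v ∘ T^j| (blocks of length at most √n starting at multiples of √n). Then for all integers 0 ≤ a < b ≤ n, |Σ_{j=a}^{b−1} v ∘ T^j| ≤ Z_n ((b − a)(n^{1/2} − 1)^{−1} + 3). -/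
private lemma aux_abs_sum_le (f : ℕ → ℝ) (C : ℝ) (hf : ∀ j, |f j| ≤ C) (c l : ℕ) :
    |∑ j ∈ Finset.Ico c (c + l), f j| ≤ (l : ℝ) * C := by
  calc |∑ j ∈ Finset.Ico c (c + l), f j| ≤ ∑ j ∈ Finset.Ico c (c + l), |f j| :=
        Finset.abs_sum_le_sum_abs _ _
    _ ≤ ∑ _j ∈ Finset.Ico c (c + l), C := Finset.sum_le_sum fun j _ => hf j
    _ = (l : ℝ) * C := by simp [Finset.sum_const, Nat.card_Ico, mul_comm]

private lemma aux_le_biSup (F : ℕ → ℕ → ℝ) (s : ℕ) (C : ℝ)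
    (h0 : ∀ i l, 0 ≤ F i l) (hC : ∀ i l, l ≤ s → F i l ≤ C)
    {i l : ℕ} (hi : i ≤ s) (hl : l ≤ s) :
    F i l ≤ ⨆ i ∈ Finset.Iic s, ⨆ l ∈ Finset.Iic s, F i l := by
  have hC0 : 0 ≤ C := le_trans (h0 0 0) (hC 0 0 (Nat.zero_le _))
  have hG : ∀ i', (⨆ l ∈ Finset.Iic s, F i' l) ≤ C := fun i' =>
    Real.iSup_le (fun l' => Real.iSup_le (fun hl' => hC i' l' (Finset.mem_Iic.mp hl')) hC0) hC0
  have bdd1 : BddAbove (Set.range fun l' => ⨆ _ : l' ∈ Finset.Iic s, F i l') := by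
    refine ⟨C, ?_⟩
    rintro y ⟨l', rfl⟩
    exact Real.iSup_le (fun hl' => hC i l' (Finset.mem_Iic.mp hl')) hC0
  have h1 : F i l ≤ ⨆ l ∈ Finset.Iic s, F i l := by
    have h := le_ciSup bdd1 l
    rwa [ciSup_pos (Finset.mem_Iic.mpr hl)] at h
  have bdd2 : BddAbove (Set.range fun i' =>
      ⨆ _ : i' ∈ Finset.Iic s, ⨆ l' ∈ Finset.Iic s, F i' l') := by
    refine ⟨C, ?_⟩
    rintro y ⟨i', rfl⟩
    exact Real.iSup_le (fun _ => hG i') hC0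
  have h2 := le_ciSup bdd2 i
  rw [ciSup_pos (Finset.mem_Iic.mpr hi)] at h2
  exact le_trans h1 h2

/-- Block decomposition bound for Birkhoff sums: with
`Z_n = max_{0 ≤ i, l ≤ ⌈√n⌉} |Σ_{j=i⌈√n⌉}^{i⌈√n⌉+l-1} v ∘ T^j|`, every Birkhoff sum
over a window `[a, b) ⊆ [0, n]` satisfies
`|Σ_{j=a}^{b-1} v ∘ T^j| ≤ Z_n ((b-a)(n^{1/2} - 1)⁻¹ + 3)`. -/
theorem birkhoff_sum_block_bound {M : Type*} (T : M → M) (v : M → ℝ)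
    (Cv : ℝ) (hv : ∀ x, |v x| ≤ Cv)
    (n : ℕ) (hn : 4 ≤ n) (x : M) (a b : ℕ) (hab : a < b) (hbn : b ≤ n) :
    |∑ j ∈ Finset.Ico a b, v (T^[j] x)| ≤
      (⨆ i ∈ Finset.Iic (Nat.ceil (Real.sqrt n)),
        ⨆ l ∈ Finset.Iic (Nat.ceil (Real.sqrt n)),
          |∑ j ∈ Finset.Ico (i * Nat.ceil (Real.sqrt n))
              (i * Nat.ceil (Real.sqrt n) + l), v (T^[j] x)|)
        * ((b - a : ℝ) * ((n : ℝ) ^ ((1 : ℝ) / 2) - 1)⁻¹ + 3) := by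
  set s : ℕ := Nat.ceil (Real.sqrt n) with hs
  set Z : ℝ := ⨆ i ∈ Finset.Iic s, ⨆ l ∈ Finset.Iic s,
      |∑ j ∈ Finset.Ico (i * s) (i * s + l), v (T^[j] x)| with hZ
  set f : ℕ → ℝ := fun j => v (T^[j] x) with hf
  have hCv0 : 0 ≤ Cv := le_trans (abs_nonneg _) (hv x)
  -- basic facts about s and sqrt
  have hsqrt2 : (2 : ℝ) ≤ Real.sqrt n := by
    have h4 : ((4 : ℝ)) ≤ (n : ℝ) := by exact_mod_cast hn
    have hm : Real.sqrt 4 ≤ Real.sqrt n := Real.sqrt_le_sqrt h4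
    have he : Real.sqrt 4 = 2 := by
      rw [show (4:ℝ) = 2^2 by norm_num, Real.sqrt_sq (by norm_num : (0:ℝ) ≤ 2)]
    linarith
  have hsle : Real.sqrt n ≤ (s : ℝ) := Nat.le_ceil _
  have hs2 : 2 ≤ s := by exact_mod_cast le_trans hsqrt2 hsle
  have hs0 : 0 < s := by omega
  have hns : (n : ℝ) ≤ (s : ℝ) * s := by
    nlinarith [Real.sq_sqrt (by positivity : (0:ℝ) ≤ (n:ℝ)), Real.sqrt_nonneg (n:ℝ)]
  have hnss : n ≤ s * s := by exact_mod_cast hns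
  -- the block bound
  have hblock : ∀ c l : ℕ, c ≤ s → l ≤ s →
      |∑ j ∈ Finset.Ico (c * s) (c * s + l), f j| ≤ Z := by
    intro c l hc hl
    refine aux_le_biSup (fun i l => |∑ j ∈ Finset.Ico (i * s) (i * s + l), f j|) s
      ((s : ℝ) * Cv) (fun _ _ => abs_nonneg _) ?_ hc hl
    intro i l hl'
    calc |∑ j ∈ Finset.Ico (i * s) (i * s + l), f j| ≤ (l : ℝ) * Cv :=
          aux_abs_sum_le f Cv (fun j => hv _) _ _
      _ ≤ (s : ℝ) * Cv := by
          have : (l : ℝ) ≤ (s : ℝ) := by exact_mod_cast hl'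
          exact mul_le_mul_of_nonneg_right this hCv0
  have hZ0 : 0 ≤ Z := le_trans (abs_nonneg _) (hblock 0 0 (Nat.zero_le _) (Nat.zero_le _))
  -- chains of full blocks
  have hchain : ∀ d : ℕ, d ≤ s → ∀ c : ℕ, c ≤ d →
      |∑ j ∈ Finset.Ico (c * s) (d * s), f j| ≤ ((d - c : ℕ) : ℝ) * Z := by
    intro d hd
    induction d with
    | zero => intro c hc; interval_cases c; simp
    | succ d ih =>
      intro c hc
      rcases Nat.lt_or_ge c (d + 1) with hlt | hge
      · have hcd : c ≤ d := by omega
        have hsplit : ∑ j ∈ Finset.Ico (c * s) (d * s), f j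
            + ∑ j ∈ Finset.Ico (d * s) ((d+1) * s), f j
            = ∑ j ∈ Finset.Ico (c * s) ((d+1) * s), f j :=
          Finset.sum_Ico_consecutive f (Nat.mul_le_mul_right s hcd)
            (Nat.mul_le_mul_right s (by omega))
        have hb : |∑ j ∈ Finset.Ico (d * s) ((d+1) * s), f j| ≤ Z := by
          have : (d+1) * s = d * s + s := by ring
          rw [this]
          exact hblock d s (by omega) le_rfl
        have h1 := ih (by omega) c hcd
        calc |∑ j ∈ Finset.Ico (c * s) ((d+1) * s), f j|
            = |∑ j ∈ Finset.Ico (c * s) (d * s), f j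
                + ∑ j ∈ Finset.Ico (d * s) ((d+1) * s), f j| := by rw [hsplit]
          _ ≤ |∑ j ∈ Finset.Ico (c * s) (d * s), f j|
                + |∑ j ∈ Finset.Ico (d * s) ((d+1) * s), f j| := abs_add_le _ _
          _ ≤ ((d - c : ℕ) : ℝ) * Z + Z := add_le_add h1 hb
          _ = ((d + 1 - c : ℕ) : ℝ) * Z := by
              have : (d + 1 - c : ℕ) = (d - c) + 1 := by omega
              rw [this]; push_cast; ring
      · have : c = d + 1 := by omega
        subst this; simp
  -- partial blocks starting at a multiple of s
  have hpartial : ∀ c m : ℕ, c ≤ s → c * s ≤ m → m ≤ c * s + s →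
      |∑ j ∈ Finset.Ico (c * s) m, f j| ≤ Z := by
    intro c m hc h1 h2
    have e : m = c * s + (m - c * s) := by omega
    rw [e]
    exact hblock c (m - c * s) hc (by omega)
  -- the two division indices
  set i0 : ℕ := a / s with hi0
  set i1 : ℕ := b / s with hi1
  have hi0a : i0 * s ≤ a := Nat.div_mul_le_self a s
  have hai0 : a < (i0 + 1) * s := (Nat.div_lt_iff_lt_mul hs0).mp (by omega)
  have hi1b : i1 * s ≤ b := Nat.div_mul_le_self b s
  have hbi1 : b < (i1 + 1) * s := (Nat.div_lt_iff_lt_mul hs0).mp (by omega)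
  have hi01 : i0 ≤ i1 := Nat.div_le_div_right (le_of_lt hab)
  have hi1s : i1 ≤ s := by
    have h1 : b / s ≤ (s * s) / s := Nat.div_le_div_right (le_trans hbn hnss)
    rwa [Nat.mul_div_cancel_left s hs0] at h1
  have hi0s : i0 ≤ s := le_trans hi01 hi1s
  -- sqrt facts for the RHS
  have hrpow : (n : ℝ) ^ ((1 : ℝ) / 2) = Real.sqrt n := (Real.sqrt_eq_rpow _).symm
  have hinvpos : 0 < Real.sqrt n - 1 := by linarith
  have hba0 : (0 : ℝ) ≤ (b - a : ℝ) := by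
    have : (a : ℝ) ≤ b := by exact_mod_cast hab.le
    linarith
  have hbainv : 0 ≤ (b - a : ℝ) * ((n : ℝ) ^ ((1 : ℝ) / 2) - 1)⁻¹ := by
    rw [hrpow]; positivity
  rcases eq_or_lt_of_le hi01 with heq | hlt
  · -- a, b in the same block
    have hsplit : ∑ j ∈ Finset.Ico (i0 * s) a, f j + ∑ j ∈ Finset.Ico a b, f j
        = ∑ j ∈ Finset.Ico (i0 * s) b, f j :=
      Finset.sum_Ico_consecutive f hi0a hab.le
    have h1 : |∑ j ∈ Finset.Ico (i0 * s) a, f j| ≤ Z :=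
      hpartial i0 a hi0s hi0a (by have e : (i0 + 1) * s = i0 * s + s := Nat.succ_mul i0 s; omega)
    have h2 : |∑ j ∈ Finset.Ico (i0 * s) b, f j| ≤ Z := by
      have e1 : (i1 + 1) * s = i1 * s + s := by ring
      have e2 : i0 * s = i1 * s := by rw [heq]
      exact hpartial i0 b hi0s (by omega) (by omega)
    have h3 : |∑ j ∈ Finset.Ico a b, f j| ≤ 2 * Z := by
      have : ∑ j ∈ Finset.Ico a b, f j
          = ∑ j ∈ Finset.Ico (i0 * s) b, f j - ∑ j ∈ Finset.Ico (i0 * s) a, f j := by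
        rw [← hsplit]; ring
      rw [this]
      calc |∑ j ∈ Finset.Ico (i0 * s) b, f j - ∑ j ∈ Finset.Ico (i0 * s) a, f j|
          ≤ |∑ j ∈ Finset.Ico (i0 * s) b, f j| + |∑ j ∈ Finset.Ico (i0 * s) a, f j| :=
            abs_sub _ _
        _ ≤ 2 * Z := by linarith
    calc |∑ j ∈ Finset.Ico a b, f j| ≤ 2 * Z := h3
      _ ≤ Z * ((b - a : ℝ) * ((n : ℝ) ^ ((1 : ℝ) / 2) - 1)⁻¹ + 3) := by nlinarith
  · -- general case: i0 < i1
    set k : ℕ := i1 - (i0 + 1) with hk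
    have hksle : k * s ≤ b - a := by
      have e3 : k * s + (i0 + 1) * s = i1 * s := by
        rw [← Nat.add_mul]
        congr 1
        omega
      omega
    have hsplit1 : ∑ j ∈ Finset.Ico a ((i0 + 1) * s), f j
        + ∑ j ∈ Finset.Ico ((i0 + 1) * s) b, f j = ∑ j ∈ Finset.Ico a b, f j :=
      Finset.sum_Ico_consecutive f hai0.le
        (le_trans (Nat.mul_le_mul_right s hlt) hi1b)
    have hsplit2 : ∑ j ∈ Finset.Ico ((i0 + 1) * s) (i1 * s), f j
        + ∑ j ∈ Finset.Ico (i1 * s) b, f j = ∑ j ∈ Finset.Ico ((i0 + 1) * s) b, f j :=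
      Finset.sum_Ico_consecutive f (Nat.mul_le_mul_right s hlt) hi1b
    -- bound the three pieces
    have hA : |∑ j ∈ Finset.Ico a ((i0 + 1) * s), f j| ≤ 2 * Z := by
      have hsp : ∑ j ∈ Finset.Ico (i0 * s) a, f j + ∑ j ∈ Finset.Ico a ((i0+1) * s), f j
          = ∑ j ∈ Finset.Ico (i0 * s) ((i0+1) * s), f j :=
        Finset.sum_Ico_consecutive f hi0a hai0.le
      have h1 : |∑ j ∈ Finset.Ico (i0 * s) a, f j| ≤ Z :=
        hpartial i0 a hi0s hi0a (by have e : (i0 + 1) * s = i0 * s + s := Nat.succ_mul i0 s; omega)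
      have h2 : |∑ j ∈ Finset.Ico (i0 * s) ((i0+1) * s), f j| ≤ Z :=
        hpartial i0 ((i0+1) * s) hi0s (Nat.mul_le_mul_right s (by omega))
          (le_of_eq (by ring))
      have : ∑ j ∈ Finset.Ico a ((i0+1) * s), f j
          = ∑ j ∈ Finset.Ico (i0 * s) ((i0+1) * s), f j
            - ∑ j ∈ Finset.Ico (i0 * s) a, f j := by rw [← hsp]; ring
      rw [this]
      calc |_ - _| ≤ |∑ j ∈ Finset.Ico (i0 * s) ((i0+1) * s), f j|
            + |∑ j ∈ Finset.Ico (i0 * s) a, f j| := abs_sub _ _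
        _ ≤ 2 * Z := by linarith
    have hB : |∑ j ∈ Finset.Ico ((i0 + 1) * s) (i1 * s), f j| ≤ (k : ℝ) * Z := by
      have := hchain i1 hi1s (i0 + 1) hlt
      rwa [hk]
    have hC2 : |∑ j ∈ Finset.Ico (i1 * s) b, f j| ≤ Z := by
      have e2 : (i1 + 1) * s = i1 * s + s := by ring
      exact hpartial i1 b hi1s hi1b (by omega)
    have htot : |∑ j ∈ Finset.Ico a b, f j| ≤ (k : ℝ) * Z + 3 * Z := by
      calc |∑ j ∈ Finset.Ico a b, f j|
          = |∑ j ∈ Finset.Ico a ((i0 + 1) * s), f j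
              + (∑ j ∈ Finset.Ico ((i0 + 1) * s) (i1 * s), f j
                 + ∑ j ∈ Finset.Ico (i1 * s) b, f j)| := by rw [hsplit2, hsplit1]
        _ ≤ |∑ j ∈ Finset.Ico a ((i0 + 1) * s), f j|
              + (|∑ j ∈ Finset.Ico ((i0 + 1) * s) (i1 * s), f j|
                 + |∑ j ∈ Finset.Ico (i1 * s) b, f j|) :=
            le_trans (abs_add_le _ _) (by gcongr; exact abs_add_le _ _)
        _ ≤ (k : ℝ) * Z + 3 * Z := by linarith
    -- compare k with (b-a)/(sqrt n - 1)
    have hkle : (k : ℝ) ≤ (b - a : ℝ) * ((n : ℝ) ^ ((1 : ℝ) / 2) - 1)⁻¹ := by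
      rw [hrpow, ← div_eq_mul_inv, le_div_iff₀ hinvpos]
      have h1 : (k : ℝ) * s ≤ (b - a : ℝ) := by
        have h2 : ((k * s : ℕ) : ℝ) ≤ ((b - a : ℕ) : ℝ) := by exact_mod_cast hksle
        push_cast at h2
        have : ((b : ℝ) - a) = ((b - a : ℕ) : ℝ) := by
          have : a ≤ b := hab.le
          push_cast [this]; ring
        rw [this]; exact_mod_cast h2
      have h3 : (k : ℝ) * (Real.sqrt n - 1) ≤ (k : ℝ) * s := by
        have : Real.sqrt n - 1 ≤ (s : ℝ) := by linarith
        have hk0 : (0 : ℝ) ≤ k := Nat.cast_nonneg k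
        nlinarith
      linarith
    calc |∑ j ∈ Finset.Ico a b, f j| ≤ (k : ℝ) * Z + 3 * Z := htot
      _ = Z * ((k : ℝ) + 3) := by ring
      _ ≤ Z * ((b - a : ℝ) * ((n : ℝ) ^ ((1 : ℝ) / 2) - 1)⁻¹ + 3) := by
          apply mul_le_mul_of_nonneg_left _ hZ0
          linarith
end
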